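/- Let f(z) = z + a₂z² + a₃z³ + ⋯ be analytic on the unit disk and belong to BK(α) for 0 ≤ α < 1; that is, zf''(z)/f'(z) = F_α(w(z)) for some analytic w: Δ → Δ with w(0) = 0, where F_α(z) = z/(1-αz²). Then |a₂| ≤ 1/2 and |a₃| ≤ 1/6. -/

import Mathlib

open Metric Filter Set

private lemma mobius_lt_one (a z : ℂ) (ha : ‖a‖ < 1) (hz : ‖z‖ < 1) :
    ‖(z - a) / (1 - (starRingEnd ℂ) a * z)‖ < 1 := by
  have hden : ‖(starRingEnd ℂ) a * z‖ < 1 := by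
    rw [norm_mul, Complex.norm_conj]
    nlinarith [norm_nonneg a, norm_nonneg z]
  have hne : (1 : ℂ) - (starRingEnd ℂ) a * z ≠ 0 := by
    intro h
    have h1 : (starRingEnd ℂ) a * z = 1 := by linear_combination -h
    rw [h1] at hden; simp at hden
  have hpos : 0 < ‖1 - (starRingEnd ℂ) a * z‖ := norm_pos_iff.mpr hne
  rw [norm_div, div_lt_one hpos]
  have h1 : Complex.normSq a < 1 := by
    rw [← Complex.sq_norm]; nlinarith [norm_nonneg a]
  have h2 : Complex.normSq z < 1 := by
    rw [← Complex.sq_norm]; nlinarith [norm_nonneg z]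
  have key : Complex.normSq (1 - (starRingEnd ℂ) a * z) - Complex.normSq (z - a)
      = (1 - Complex.normSq a) * (1 - Complex.normSq z) := by
    simp only [Complex.normSq_apply, Complex.sub_re, Complex.sub_im, Complex.mul_re,
      Complex.mul_im, Complex.conj_re, Complex.conj_im, Complex.one_re, Complex.one_im]
    ring
  have hlt : Complex.normSq (z - a) < Complex.normSq (1 - (starRingEnd ℂ) a * z) := by
    nlinarith
  rw [Complex.norm_def, Complex.norm_def]
  exact Real.sqrt_lt_sqrt (Complex.normSq_nonneg _) hlt

private lemma schwarz_pick_center {φ : ℂ → ℂ} (hd : DifferentiableOn ℂ φ (ball 0 1))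
    (hb : ∀ z ∈ ball (0:ℂ) 1, ‖φ z‖ ≤ 1) :
    ‖deriv φ 0‖ ≤ 1 - ‖φ 0‖ ^ 2 := by
  have h0 : (0:ℂ) ∈ ball (0:ℂ) 1 := by simp
  have main : ∀ t : ℝ, t ∈ Set.Ioo (0:ℝ) 1 →
      t * ‖deriv φ 0‖ + t ^ 2 * ‖φ 0‖ ^ 2 ≤ 1 := by
    intro t ht
    set c : ℂ := (t : ℂ) * φ 0 with hc
    have hφz : ∀ z ∈ ball (0:ℂ) 1, ‖(t:ℂ) * φ z‖ ≤ t := by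
      intro z hz
      rw [norm_mul, Complex.norm_real, Real.norm_eq_abs, abs_of_pos ht.1]
      nlinarith [hb z hz, norm_nonneg (φ z), ht.1, ht.2]
    have hcabs : ‖c‖ ≤ t := hφz 0 h0
    have hct : ‖c‖ < 1 := lt_of_le_of_lt hcabs ht.2
    have hdenne : ∀ z ∈ ball (0:ℂ) 1, (1 : ℂ) - (starRingEnd ℂ) c * ((t:ℂ) * φ z) ≠ 0 := by
      intro z hz
      have habs : ‖(starRingEnd ℂ) c * ((t:ℂ) * φ z)‖ < 1 := by
        rw [norm_mul, Complex.norm_conj]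
        nlinarith [hφz z hz, hcabs, ht.1, ht.2, norm_nonneg ((t:ℂ) * φ z), norm_nonneg c]
      intro h
      have h1 : (starRingEnd ℂ) c * ((t:ℂ) * φ z) = 1 := by linear_combination -h
      rw [h1] at habs; simp at habs
    set g : ℂ → ℂ := fun z => ((t:ℂ) * φ z - c) / (1 - (starRingEnd ℂ) c * ((t:ℂ) * φ z))
      with hgdef
    have htφd : DifferentiableOn ℂ (fun z => (t:ℂ) * φ z) (ball 0 1) :=
      hd.const_smul (t:ℂ)
    have hgd : DifferentiableOn ℂ g (ball 0 1) := by
      apply DifferentiableOn.div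
      · exact htφd.sub_const c
      · exact (differentiableOn_const _).sub ((differentiableOn_const _).mul htφd)
      · exact hdenne
    have hg0 : g 0 = 0 := by simp [hgdef, hc]
    have hmaps : Set.MapsTo g (ball (0:ℂ) 1) (ball (0:ℂ) 1) := by
      intro z hz
      rw [mem_ball, dist_zero_right]
      exact mobius_lt_one c ((t:ℂ) * φ z) hct (lt_of_le_of_lt (hφz z hz) ht.2)
    have hder := Complex.norm_deriv_le_one_of_mapsTo_ball hgd (by rw [hg0]; exact hmaps.mono_right ball_subset_closedBall) one_pos
    have hφ0d : DifferentiableAt ℂ φ 0 :=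
      (hd.differentiableAt (isOpen_ball.mem_nhds h0))
    have hnumd : DifferentiableAt ℂ (fun z => (t:ℂ) * φ z - c) 0 :=
      ((hφ0d.const_mul _).sub_const c)
    have hdend : DifferentiableAt ℂ (fun z => (1:ℂ) - (starRingEnd ℂ) c * ((t:ℂ) * φ z)) 0 :=
      ((differentiableAt_const _).sub ((hφ0d.const_mul _).const_mul _))
    have hden0 : ((1:ℂ) - (starRingEnd ℂ) c * ((t:ℂ) * φ 0)) ≠ 0 := hdenne 0 h0
    have hnum : deriv (fun z => (t:ℂ) * φ z - c) 0 = (t:ℂ) * deriv φ 0 := by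
      rw [deriv_sub_const, deriv_const_mul _ hφ0d]
    have hnum0 : ((t:ℂ) * φ 0 - c) = 0 := by rw [hc]; ring
    have hgder : deriv g 0 = ((t:ℂ) * deriv φ 0) / (1 - (starRingEnd ℂ) c * c) := by
      rw [hgdef]
      rw [deriv_fun_div hnumd hdend hden0]
      rw [hnum, hnum0]
      rw [show ((t:ℂ) * φ 0) = c from hc.symm]
      have hden0' : (1:ℂ) - (starRingEnd ℂ) c * c ≠ 0 := by
        rwa [show ((t:ℂ) * φ 0) = c from hc.symm] at hden0
      field_simp
      ring
    have hccabs : (starRingEnd ℂ) c * c = (Complex.normSq c : ℂ) := by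
      rw [mul_comm, Complex.mul_conj]
    have habsden : ‖1 - (starRingEnd ℂ) c * c‖ = 1 - ‖c‖ ^ 2 := by
      rw [hccabs, show (1:ℂ) - (Complex.normSq c : ℂ) = ((1 - Complex.normSq c : ℝ) : ℂ) by
        push_cast; ring, Complex.norm_real, Real.norm_eq_abs, abs_of_nonneg, ← Complex.sq_norm]
      rw [← Complex.sq_norm]
      nlinarith [norm_nonneg c]
    have habsc : ‖c‖ = t * ‖φ 0‖ := by
      rw [hc, norm_mul, Complex.norm_real, Real.norm_eq_abs, abs_of_pos ht.1]
    have hfin : t * ‖deriv φ 0‖ / (1 - ‖c‖ ^ 2) ≤ 1 := by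
      have : ‖deriv g 0‖ =
          t * ‖deriv φ 0‖ / (1 - ‖c‖ ^ 2) := by
        rw [hgder, norm_div, habsden, norm_mul, Complex.norm_real, Real.norm_eq_abs, abs_of_pos ht.1]
      rw [this] at hder; exact hder
    have hposd : 0 < 1 - ‖c‖ ^ 2 := by nlinarith [norm_nonneg c]
    rw [div_le_one hposd] at hfin
    rw [habsc] at hfin
    nlinarith [hfin]
  have hlim : Filter.Tendsto
      (fun t : ℝ => t * ‖deriv φ 0‖ + t ^ 2 * ‖φ 0‖ ^ 2)
      (nhdsWithin 1 (Set.Iio 1))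
      (nhds (‖deriv φ 0‖ + ‖φ 0‖ ^ 2)) := by
    have hcont : Continuous
        (fun t : ℝ => t * ‖deriv φ 0‖ + t ^ 2 * ‖φ 0‖ ^ 2) := by
      fun_prop
    have := Filter.Tendsto.mono_left (hcont.tendsto 1)
      (nhdsWithin_le_nhds (s := Set.Iio (1:ℝ)))
    simpa using this
  have hev : ∀ᶠ t in nhdsWithin (1:ℝ) (Set.Iio 1),
      t * ‖deriv φ 0‖ + t ^ 2 * ‖φ 0‖ ^ 2 ≤ 1 :=
    Filter.eventually_of_mem (Ioo_mem_nhdsLT_of_mem (by norm_num : (1:ℝ) ∈ Set.Ioc 0 1)) main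
  have := le_of_tendsto hlim hev
  linarith


private lemma second_deriv_mul {a b : ℂ → ℂ} {s : Set ℂ} (hs : IsOpen s) (h0 : (0:ℂ) ∈ s)
    (ha : AnalyticOnNhd ℂ a s) (hb : AnalyticOnNhd ℂ b s) :
    deriv (fun z => a z * b z) 0 = deriv a 0 * b 0 + a 0 * deriv b 0 ∧
    deriv (deriv (fun z => a z * b z)) 0 =
      deriv (deriv a) 0 * b 0 + 2 * deriv a 0 * deriv b 0 + a 0 * deriv (deriv b) 0 := by
  have hd1 : ∀ z ∈ s, deriv (fun z => a z * b z) z = deriv a z * b z + a z * deriv b z :=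
    fun z hz => deriv_mul ((ha z hz).differentiableAt) ((hb z hz).differentiableAt)
  have hev : deriv (fun z => a z * b z) =ᶠ[nhds 0]
      fun z => deriv a z * b z + a z * deriv b z :=
    Filter.eventually_of_mem (hs.mem_nhds h0) hd1
  refine ⟨hd1 0 h0, ?_⟩
  rw [hev.deriv_eq]
  rw [deriv_fun_add (f := fun z => deriv a z * b z) (g := fun z => a z * deriv b z) (((ha.deriv 0 h0).differentiableAt).mul ((hb 0 h0).differentiableAt))
      (((ha 0 h0).differentiableAt).mul ((hb.deriv 0 h0).differentiableAt))]
  rw [deriv_fun_mul ((ha.deriv 0 h0).differentiableAt) ((hb 0 h0).differentiableAt)]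
  rw [deriv_fun_mul ((ha 0 h0).differentiableAt) ((hb.deriv 0 h0).differentiableAt)]
  ring

theorem BK_coeff_bounds (α : ℝ) (h0 : 0 ≤ α) (h1 : α < 1)
    (f w : ℂ → ℂ) (p : FormalMultilinearSeries ℂ ℂ ℂ)
    (hf : HasFPowerSeriesOnBall f p 0 1)
    (hp0 : p.coeff 0 = 0) (hp1 : p.coeff 1 = 1)
    (hw : AnalyticOn ℂ w (Metric.ball 0 1))
    (hw0 : w 0 = 0) (hwb : ∀ z ∈ Metric.ball (0 : ℂ) 1, ‖w z‖ < 1)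
    (hsub : ∀ z ∈ Metric.ball (0 : ℂ) 1,
      z * deriv (deriv f) z / deriv f z = w z / (1 - (α : ℂ) * (w z) ^ 2)) :
    ‖p.coeff 2‖ ≤ 1 / 2 ∧ ‖p.coeff 3‖ ≤ 1 / 6 := by
  have hballe : Metric.eball (0:ℂ) 1 = Metric.ball (0:ℂ) 1 := by
    simpa using Metric.emetric_ball_nnreal (x := (0:ℂ)) (ε := 1)
  have h0mem : (0:ℂ) ∈ Metric.ball (0:ℂ) 1 := by simp
  have hfa : AnalyticOnNhd ℂ f (Metric.ball 0 1) := hballe ▸ hf.analyticOnNhd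
  have hwa : AnalyticOnNhd ℂ w (Metric.ball 0 1) :=
    (Metric.isOpen_ball.analyticOn_iff_analyticOnNhd).mp hw
  have hF1a : AnalyticOnNhd ℂ (deriv f) (Metric.ball 0 1) := hfa.deriv
  have hF2a : AnalyticOnNhd ℂ (deriv (deriv f)) (Metric.ball 0 1) := hF1a.deriv
  -- coefficients of f via iterated derivatives
  have hcoef : ∀ n : ℕ, iteratedDeriv n f 0 = (n.factorial : ℂ) * p.coeff n := by
    intro n
    rw [iteratedDeriv_eq_iteratedFDeriv, ← hf.factorial_smul 1 n, nsmul_eq_mul]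
    rfl
  have hF10 : deriv f 0 = 1 := by
    rw [hf.hasFPowerSeriesAt.deriv]; exact hp1
  have hF20 : deriv (deriv f) 0 = 2 * p.coeff 2 := by
    have h2 : iteratedDeriv 2 f = deriv (deriv f) := by
      rw [iteratedDeriv_succ, iteratedDeriv_one]
    rw [← h2, hcoef 2]; norm_num [Nat.factorial]
  have hF30 : deriv (deriv (deriv f)) 0 = 6 * p.coeff 3 := by
    have h3 : iteratedDeriv 3 f = deriv (deriv (deriv f)) := by
      rw [iteratedDeriv_succ, iteratedDeriv_succ, iteratedDeriv_one]
    rw [← h3, hcoef 3]; norm_num [Nat.factorial]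
  -- nonvanishing of the denominator
  have hne : ∀ z ∈ Metric.ball (0:ℂ) 1, (1:ℂ) - (α:ℂ) * w z ^ 2 ≠ 0 := by
    intro z hz h
    have habs : ‖(α:ℂ) * w z ^ 2‖ < 1 := by
      rw [norm_mul, norm_pow, Complex.norm_real, Real.norm_eq_abs, abs_of_nonneg h0]
      nlinarith [hwb z hz, norm_nonneg (w z)]
    have h1' : (α:ℂ) * w z ^ 2 = 1 := by linear_combination -h
    rw [h1'] at habs; simp at habs
  have hua : AnalyticOnNhd ℂ (fun z => ((1:ℂ) - (α:ℂ) * w z ^ 2)⁻¹) (Metric.ball 0 1) :=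
    (analyticOnNhd_const.sub (analyticOnNhd_const.mul (hwa.pow 2))).inv hne
  have hha : AnalyticOnNhd ℂ (fun z => w z * ((1:ℂ) - (α:ℂ) * w z ^ 2)⁻¹)
      (Metric.ball 0 1) := hwa.mul hua
  have hu0 : ((1:ℂ) - (α:ℂ) * w 0 ^ 2)⁻¹ = 1 := by rw [hw0]; simp
  -- deriv u 0 = 0
  have hwd0 : DifferentiableAt ℂ w 0 := (hwa 0 h0mem).differentiableAt
  have hgd : DifferentiableAt ℂ (fun z => (1:ℂ) - (α:ℂ) * w z ^ 2) 0 :=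
    (differentiableAt_const _).sub ((hwd0.pow 2).const_mul _)
  have hdg : deriv (fun z => (1:ℂ) - (α:ℂ) * w z ^ 2) 0 = 0 := by
    rw [deriv_fun_sub (differentiableAt_const _) ((hwd0.fun_pow 2).const_mul _), deriv_const]
    rw [deriv_const_mul _ (hwd0.fun_pow 2), deriv_fun_pow hwd0 2]
    simp [hw0]
  have hdu : deriv (fun z => ((1:ℂ) - (α:ℂ) * w z ^ 2)⁻¹) 0 = 0 := by
    rw [deriv_fun_inv'' hgd (hne 0 h0mem), hdg]
    simp
  -- the functional equation, eventually near 0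
  have hF1ne : ∀ᶠ z in nhds (0:ℂ), deriv f z ≠ 0 :=
    (hF1a 0 h0mem).continuousAt.eventually_ne (by rw [hF10]; exact one_ne_zero)
  have hballev : ∀ᶠ z in nhds (0:ℂ), z ∈ Metric.ball (0:ℂ) 1 :=
    Filter.eventually_of_mem (Metric.isOpen_ball.mem_nhds h0mem) (fun z hz => hz)
  have hAB : (fun z => z * deriv (deriv f) z) =ᶠ[nhds (0:ℂ)]
      (fun z => w z * ((1:ℂ) - (α:ℂ) * w z ^ 2)⁻¹ * deriv f z) := by
    filter_upwards [hF1ne, hballev] with z hz1 hz2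
    have heq := hsub z hz2
    have hdz := hne z hz2
    rw [div_eq_div_iff hz1 hdz] at heq
    have hinv := mul_inv_cancel₀ hdz
    linear_combination (1 - (α:ℂ) * w z ^ 2)⁻¹ * heq - z * deriv (deriv f) z * hinv
  -- derivatives of both sides via the product rule
  have hAd := second_deriv_mul (a := fun z : ℂ => z) (b := deriv (deriv f))
    Metric.isOpen_ball h0mem analyticOnNhd_id hF2a
  have hBd := second_deriv_mul (a := fun z => w z * ((1:ℂ) - (α:ℂ) * w z ^ 2)⁻¹)
    (b := deriv f) Metric.isOpen_ball h0mem hha hF1a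
  have hhd := second_deriv_mul (a := w) (b := fun z => ((1:ℂ) - (α:ℂ) * w z ^ 2)⁻¹)
    Metric.isOpen_ball h0mem hwa hua
  have hidd : deriv (fun z : ℂ => z) = fun _ => (1:ℂ) := funext fun z => deriv_id z
  have hidd2 : deriv (deriv (fun z : ℂ => z)) 0 = 0 := by rw [hidd]; simp
  have hhd1 : deriv (fun z => w z * ((1:ℂ) - (α:ℂ) * w z ^ 2)⁻¹) 0 = deriv w 0 := by
    have h := hhd.1
    beta_reduce at h
    rw [h, hu0, hw0, hdu]; ring
  have hhd2 : deriv (deriv (fun z => w z * ((1:ℂ) - (α:ℂ) * w z ^ 2)⁻¹)) 0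
      = deriv (deriv w) 0 := by
    have h := hhd.2
    beta_reduce at h
    rw [h, hu0, hw0, hdu]; ring
  have hA1 : deriv (fun z => z * deriv (deriv f) z) 0 = deriv (deriv f) 0 := by
    have h := hAd.1
    beta_reduce at h
    rw [h, deriv_id'']; ring
  have hA2 : deriv (deriv (fun z => z * deriv (deriv f) z)) 0
      = 2 * deriv (deriv (deriv f)) 0 := by
    have h := hAd.2
    beta_reduce at h
    rw [h, hidd2, deriv_id'']; ring
  have hB1 : deriv (fun z => w z * ((1:ℂ) - (α:ℂ) * w z ^ 2)⁻¹ * deriv f z) 0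
      = deriv w 0 := by
    have h := hBd.1
    beta_reduce at h
    rw [h, hhd1, hF10, hw0]; ring
  have hB2 : deriv (deriv (fun z => w z * ((1:ℂ) - (α:ℂ) * w z ^ 2)⁻¹ * deriv f z)) 0
      = deriv (deriv w) 0 + 2 * deriv w 0 * (2 * p.coeff 2) := by
    have h := hBd.2
    beta_reduce at h
    rw [h, hhd1, hhd2, hF10, hF20, hw0]; ring
  -- the two coefficient equations
  have eq1 : 2 * p.coeff 2 = deriv w 0 := by
    have h := hAB.deriv_eq
    rw [hA1, hB1] at h
    rw [← hF20]; exact h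
  have eq2 : 2 * (6 * p.coeff 3) = deriv (deriv w) 0 + 2 * deriv w 0 * (2 * p.coeff 2) := by
    have h := (hAB.deriv).deriv_eq
    rw [hA2, hB2] at h
    rw [← hF30]; exact h
  -- power series of w and the dslope function
  obtain ⟨q, hq⟩ := hwa 0 h0mem
  have hW2 : deriv (deriv w) 0 = 2 * q.coeff 2 := by
    obtain ⟨rq, hrq⟩ := hq
    have h2 : iteratedDeriv 2 w = deriv (deriv w) := by
      rw [iteratedDeriv_succ, iteratedDeriv_one]
    have h3 : iteratedDeriv 2 w 0 = ((2:ℕ).factorial : ℂ) * q.coeff 2 := by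
      rw [iteratedDeriv_eq_iteratedFDeriv, ← hrq.factorial_smul 1 2, nsmul_eq_mul]
      rfl
    rw [← h2, h3]; norm_num [Nat.factorial]
  have hφd : DifferentiableOn ℂ (dslope w 0) (Metric.ball 0 1) := by
    intro z hz
    rcases eq_or_ne z 0 with rfl | hz0
    · exact ((hq.has_fpower_series_dslope_fslope).analyticAt.differentiableAt).differentiableWithinAt
    · exact ((differentiableAt_dslope_of_ne hz0).mpr
        (hwa z hz).differentiableAt).differentiableWithinAt
  have hmapsw : Set.MapsTo w (Metric.ball (0:ℂ) 1) (Metric.ball (w 0) 1) := by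
    intro z hz
    rw [hw0, mem_ball, dist_zero_right]
    exact hwb z hz
  have hφb : ∀ z ∈ Metric.ball (0:ℂ) 1, ‖dslope w 0 z‖ ≤ 1 := by
    intro z hz
    have := Complex.norm_dslope_le_div_of_mapsTo_ball hwa.differentiableOn (hmapsw.mono_right ball_subset_closedBall) hz
    simpa using this
  have hφ0 : dslope w 0 0 = deriv w 0 := dslope_same w 0
  have hφder : deriv (dslope w 0) 0 = q.coeff 2 := by
    rw [(hq.has_fpower_series_dslope_fslope).deriv]
    exact FormalMultilinearSeries.coeff_fslope
  have hSP := schwarz_pick_center hφd hφb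
  rw [hφder, hφ0] at hSP
  have hb1 : ‖deriv w 0‖ ≤ 1 := by rw [← hφ0]; exact hφb 0 h0mem
  -- final algebra
  have hp2 : p.coeff 2 = deriv w 0 / 2 := by linear_combination eq1 / 2
  have hp3 : p.coeff 3 = (q.coeff 2 + (deriv w 0) ^ 2) / 6 := by
    have := eq2
    rw [hW2, eq1] at this
    linear_combination this / 12
  constructor
  · rw [hp2, norm_div, Complex.norm_two]
    linarith
  · rw [hp3, norm_div]
    have h6 : ‖(6 : ℂ)‖ = 6 := by
      rw [show (6:ℂ) = ((6:ℝ):ℂ) by norm_num, Complex.norm_real]; norm_num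
    rw [h6]
    have htri : ‖q.coeff 2 + (deriv w 0) ^ 2‖
        ≤ ‖q.coeff 2‖ + ‖deriv w 0‖ ^ 2 := by
      calc ‖q.coeff 2 + (deriv w 0) ^ 2‖
          ≤ ‖q.coeff 2‖ + ‖(deriv w 0) ^ 2‖ :=
            norm_add_le _ _
        _ = ‖q.coeff 2‖ + ‖deriv w 0‖ ^ 2 := by rw [norm_pow]
    have : ‖q.coeff 2 + (deriv w 0) ^ 2‖ ≤ 1 := by linarith
    linarith
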